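/- Let b ∈ ℝ^m, A ∈ M_{m,n}(ℝ), c > 0, t > 1, and let α ∈ (ℝ₊)^m, β ∈ (ℝ₊)^n with Σα_i = Σβ_j = 1. If there exists q ∈ ℤⁿ such that ‖Aq + b‖_{ℤ,α} ≤ c and |q|_β ≤ t, then for every u ∈ ℤ^m: ‖u·b‖_ℤ ≤ (m+n)·max{ max_{1≤j≤n} t^{β_j} ‖A_{*,j}·u‖_ℤ , max_{1≤i≤m} c^{α_i} |u_i| }, where A_{*,j} denotes the j-th column of A. -/

import Mathlib

/-- Distance from a real number to the nearest integer. -/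
noncomputable def distZ (x : ℝ) : ℝ := |x - round x|

lemma distZ_nonneg (x : ℝ) : 0 ≤ distZ x := abs_nonneg _

lemma distZ_le_int (x : ℝ) (k : ℤ) : distZ x ≤ |x - k| := round_le x k

lemma distZ_zero : distZ 0 = 0 := by simp [distZ]

lemma distZ_add (x y : ℝ) : distZ (x + y) ≤ distZ x + distZ y := by
  calc distZ (x + y) ≤ |x + y - ((round x + round y : ℤ) : ℝ)| := distZ_le_int _ _
    _ ≤ distZ x + distZ y := by
        unfold distZ
        push_cast
        calc |x + y - (round x + round y)| = |(x - round x) + (y - round y)| := by ring_nf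
          _ ≤ _ := abs_add_le _ _

lemma distZ_sum {ι : Type*} (s : Finset ι) (f : ι → ℝ) :
    distZ (∑ i ∈ s, f i) ≤ ∑ i ∈ s, distZ (f i) := by
  classical
  induction s using Finset.induction with
  | empty => simp [distZ_zero]
  | insert _ _ h ih =>
      rw [Finset.sum_insert h, Finset.sum_insert h]
      exact (distZ_add _ _).trans (by linarith)

lemma distZ_int_mul (k : ℤ) (x : ℝ) : distZ ((k : ℝ) * x) ≤ |(k : ℝ)| * distZ x := by
  calc distZ ((k : ℝ) * x) ≤ |(k : ℝ) * x - ((k * round x : ℤ) : ℝ)| := distZ_le_int _ _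
    _ = |(k : ℝ)| * distZ x := by
        unfold distZ
        push_cast
        rw [← abs_mul]
        ring_nf

/-- Weighted transference principle (Cassels, Theorem XVII), part (1): a solution of the
inhomogeneous system forces `‖u·b‖_ℤ` to be small for every `u ∈ ℤ^m`. -/
theorem transference_part_one (m n : ℕ) (hm : 0 < m) (hn : 0 < n)
    (A : Matrix (Fin m) (Fin n) ℝ) (b : Fin m → ℝ)
    (α : Fin m → ℝ) (hα_pos : ∀ i, 0 < α i) (hα_sum : ∑ i, α i = 1)
    (β : Fin n → ℝ) (hβ_pos : ∀ j, 0 < β j) (hβ_sum : ∑ j, β j = 1)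
    (c t : ℝ) (hc : 0 < c) (ht : 1 < t)
    (q : Fin n → ℤ)
    (hq1 : (⨆ i, distZ ((∑ j, A i j * (q j : ℝ)) + b i) ^ ((1 : ℝ) / α i)) ≤ c)
    (hq2 : (⨆ j, |(q j : ℝ)| ^ ((1 : ℝ) / β j)) ≤ t) :
    ∀ u : Fin m → ℤ,
      distZ (∑ i, (u i : ℝ) * b i) ≤
        (m + n) * max (⨆ j, t ^ β j * distZ (∑ i, A i j * (u i : ℝ)))
          (⨆ i, c ^ α i * |(u i : ℝ)|) := by
  intro u
  set v : Fin m → ℝ := fun i => (∑ j, A i j * (q j : ℝ)) + b i with hv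
  set w : Fin n → ℝ := fun j => ∑ i, A i j * (u i : ℝ) with hw
  set M1 : ℝ := ⨆ j, t ^ β j * distZ (w j) with hM1
  set M2 : ℝ := ⨆ i, c ^ α i * |(u i : ℝ)| with hM2
  set M : ℝ := max M1 M2 with hM
  have hvb : ∀ i, distZ (v i) ≤ c ^ α i := by
    intro i
    have h1 : distZ (v i) ^ ((1 : ℝ) / α i) ≤ c :=
      le_trans (le_ciSup (f := fun i => distZ ((∑ j, A i j * (q j : ℝ)) + b i) ^ ((1 : ℝ) / α i))
        (Finite.bddAbove_range _) i) hq1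
    have h2 : (distZ (v i) ^ ((1 : ℝ) / α i)) ^ α i ≤ c ^ α i :=
      Real.rpow_le_rpow (Real.rpow_nonneg (distZ_nonneg _) _) h1 (hα_pos i).le
    rwa [← Real.rpow_mul (distZ_nonneg _), one_div_mul_cancel (hα_pos i).ne',
      Real.rpow_one] at h2
  have hqb : ∀ j, |(q j : ℝ)| ≤ t ^ β j := by
    intro j
    have h1 : |(q j : ℝ)| ^ ((1 : ℝ) / β j) ≤ t :=
      le_trans (le_ciSup (f := fun j => |(q j : ℝ)| ^ ((1 : ℝ) / β j))
        (Finite.bddAbove_range _) j) hq2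
    have h2 : (|(q j : ℝ)| ^ ((1 : ℝ) / β j)) ^ β j ≤ t ^ β j :=
      Real.rpow_le_rpow (Real.rpow_nonneg (abs_nonneg _) _) h1 (hβ_pos j).le
    rwa [← Real.rpow_mul (abs_nonneg _), one_div_mul_cancel (hβ_pos j).ne',
      Real.rpow_one] at h2
  -- the key identity
  have key : (∑ i, (u i : ℝ) * b i) =
      (∑ i, (u i : ℝ) * v i) + ∑ j, (-(q j) : ℝ) * w j := by
    have h1 : ∑ i, (u i : ℝ) * v i
        = (∑ j, (q j : ℝ) * w j) + ∑ i, (u i : ℝ) * b i := by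
      simp only [hv, hw, mul_add, Finset.sum_add_distrib, Finset.mul_sum]
      congr 1
      rw [Finset.sum_comm]
      apply Finset.sum_congr rfl; intro j _
      apply Finset.sum_congr rfl; intro i _; ring
    have h2 : ∑ j, (-(q j) : ℝ) * w j = -∑ j, (q j : ℝ) * w j := by
      rw [← Finset.sum_neg_distrib]
      apply Finset.sum_congr rfl; intro j _; ring
    rw [h1, h2]; ring
  have hM1_le : M1 ≤ M := le_max_left _ _
  have hM2_le : M2 ≤ M := le_max_right _ _
  have step1 : distZ (∑ i, (u i : ℝ) * b i) ≤
      (∑ i, distZ ((u i : ℝ) * v i)) + ∑ j, distZ ((-(q j) : ℝ) * w j) := by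
    rw [key]
    exact (distZ_add _ _).trans (add_le_add (distZ_sum _ _) (distZ_sum _ _))
  have bound1 : ∀ i, distZ ((u i : ℝ) * v i) ≤ M := by
    intro i
    calc distZ ((u i : ℝ) * v i) ≤ |(u i : ℝ)| * distZ (v i) := distZ_int_mul _ _
      _ ≤ |(u i : ℝ)| * c ^ α i := by
          exact mul_le_mul_of_nonneg_left (hvb i) (abs_nonneg _)
      _ = c ^ α i * |(u i : ℝ)| := by ring
      _ ≤ M2 := le_ciSup (f := fun i => c ^ α i * |(u i : ℝ)|) (Finite.bddAbove_range _) i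
      _ ≤ M := hM2_le
  have bound2 : ∀ j, distZ ((-(q j) : ℝ) * w j) ≤ M := by
    intro j
    have h0 : distZ (((-(q j) : ℤ) : ℝ) * w j) ≤ |((-(q j) : ℤ) : ℝ)| * distZ (w j) :=
      distZ_int_mul _ _
    push_cast at h0
    calc distZ ((-(q j) : ℝ) * w j) ≤ |(-(q j) : ℝ)| * distZ (w j) := h0
      _ = |(q j : ℝ)| * distZ (w j) := by rw [abs_neg]
      _ ≤ t ^ β j * distZ (w j) :=
          mul_le_mul_of_nonneg_right (hqb j) (distZ_nonneg _)
      _ ≤ M1 := le_ciSup (f := fun j => t ^ β j * distZ (w j)) (Finite.bddAbove_range _) j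
      _ ≤ M := hM1_le
  have hMnonneg : 0 ≤ M := by
    have := (distZ_nonneg ((u ⟨0, hm⟩ : ℝ) * v ⟨0, hm⟩)).trans (bound1 ⟨0, hm⟩)
    exact this
  calc distZ (∑ i, (u i : ℝ) * b i)
      ≤ (∑ i, distZ ((u i : ℝ) * v i)) + ∑ j, distZ ((-(q j) : ℝ) * w j) := step1
    _ ≤ (∑ _i : Fin m, M) + ∑ _j : Fin n, M := by
        gcongr with i _ j _
        exacts [bound1 i, bound2 j]
    _ = (m + n) * M := by
        simp [Finset.sum_const]
        ring
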